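/- For every n ≥ 1, the subgroup of the symmetric group on F_3^n generated by the permutations induced by the gates S_{1,2} (acting as x ↦ 2x on a single coordinate), X (acting as x ↦ x+1 on a single coordinate), and SUM (acting as (x,y) ↦ (x, x+y) on an ordered pair of distinct coordinates), taken over all choices of coordinates, is isomorphic to the semidirect product GL(n, F_3) ⋉ F_3^n (the affine general linear group of degree n over F_3). -/

import Mathlib

def s12Fun (n : ℕ) (i : Fin n) (x : Fin n → ZMod 3) : Fin n → ZMod 3 :=
  Function.update x i (2 * x i)

lemma s12Fun_invol (n : ℕ) (i : Fin n) (x : Fin n → ZMod 3) :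
    s12Fun n i (s12Fun n i x) = x := by
  funext j
  rcases eq_or_ne j i with rfl | h
  · simp only [s12Fun, Function.update_self]
    rw [← mul_assoc, show (2 : ZMod 3) * 2 = 1 by decide, one_mul]
  · simp [s12Fun, Function.update_of_ne h]

/-- The gate `S_{1,2}` acting on coordinate `i`: `x ↦ 2x` on that coordinate
(and the identity elsewhere), as a permutation of `F₃ⁿ`. -/
def s12Gate (n : ℕ) (i : Fin n) : Equiv.Perm (Fin n → ZMod 3) :=
  ⟨s12Fun n i, s12Fun n i, s12Fun_invol n i, s12Fun_invol n i⟩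

def xFun (n : ℕ) (i : Fin n) (c : ZMod 3) (x : Fin n → ZMod 3) : Fin n → ZMod 3 :=
  Function.update x i (x i + c)

lemma xFun_inv (n : ℕ) (i : Fin n) (c : ZMod 3) (x : Fin n → ZMod 3) :
    xFun n i (-c) (xFun n i c x) = x := by
  funext j
  rcases eq_or_ne j i with rfl | h
  · simp [xFun, Function.update_self]
  · simp [xFun, Function.update_of_ne h]

/-- The gate `X` acting on coordinate `i`: `x ↦ x + 1` on that coordinate
(and the identity elsewhere), as a permutation of `F₃ⁿ`. -/
def xGate (n : ℕ) (i : Fin n) : Equiv.Perm (Fin n → ZMod 3) :=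
  ⟨xFun n i 1, xFun n i (-1), fun x => by simpa using xFun_inv n i 1 x, fun x => by
    have := xFun_inv n i (-1) x
    simpa using this⟩

def sumFun (n : ℕ) (i j : Fin n) (s : ZMod 3) (x : Fin n → ZMod 3) : Fin n → ZMod 3 :=
  Function.update x j (x j + s * x i)

lemma sumFun_inv (n : ℕ) (i j : Fin n) (h : i ≠ j) (s : ZMod 3) (x : Fin n → ZMod 3) :
    sumFun n i j (-s) (sumFun n i j s x) = x := by
  funext m
  rcases eq_or_ne m j with rfl | hm
  · simp [sumFun, Function.update_self, Function.update_of_ne h]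
  · simp [sumFun, Function.update_of_ne hm]

/-- The gate `SUM` with control coordinate `i` and target coordinate `j ≠ i`:
`(x_i, x_j) ↦ (x_i, x_i + x_j)` (and the identity elsewhere), as a
permutation of `F₃ⁿ`. -/
def sumGate (n : ℕ) (i j : Fin n) (h : i ≠ j) : Equiv.Perm (Fin n → ZMod 3) :=
  ⟨sumFun n i j 1, sumFun n i j (-1), fun x => by simpa using sumFun_inv n i j h 1 x, fun x => by
    have := sumFun_inv n i j h (-1) x
    simpa using this⟩

/-- The set of all classical ternary gates `S_{1,2}`, `X`, `SUM` acting on the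
coordinates of `F₃ⁿ`. -/
def gateSet (n : ℕ) : Set (Equiv.Perm (Fin n → ZMod 3)) :=
  {e | (∃ i, e = s12Gate n i) ∨ (∃ i, e = xGate n i) ∨
    ∃ i j, ∃ h : i ≠ j, e = sumGate n i j h}

/-- The action of `GL(n, F₃)` on `F₃ⁿ` (written multiplicatively) by
matrix-vector multiplication, as a homomorphism into the automorphism group. -/
def glAut (n : ℕ) : GL (Fin n) (ZMod 3) →* MulAut (Multiplicative (Fin n → ZMod 3)) where
  toFun A :=
    { toFun := fun v => Multiplicative.ofAdd
        ((A : Matrix (Fin n) (Fin n) (ZMod 3)).mulVec v.toAdd)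
      invFun := fun v => Multiplicative.ofAdd
        (((A⁻¹ : GL (Fin n) (ZMod 3)) : Matrix (Fin n) (Fin n) (ZMod 3)).mulVec v.toAdd)
      left_inv := fun v => by
        simp only [toAdd_ofAdd, Matrix.mulVec_mulVec, Units.inv_mul, Matrix.one_mulVec,
          ofAdd_toAdd]
      right_inv := fun v => by
        simp only [toAdd_ofAdd, Matrix.mulVec_mulVec, Units.mul_inv, Matrix.one_mulVec,
          ofAdd_toAdd]
      map_mul' := fun v w => by
        simp only [toAdd_mul, Matrix.mulVec_add, ofAdd_add] }
  map_one' := by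
    ext v
    simp [Matrix.one_mulVec]
  map_mul' := fun A B => by
    ext v
    simp [Matrix.mulVec_mulVec, Units.val_mul]

/-! ### Auxiliary development -/

section Aux

variable {n : ℕ}

/-- The affine action of the semidirect product on `F₃ⁿ`. -/
def affHom (n : ℕ) :
    (Multiplicative (Fin n → ZMod 3) ⋊[glAut n] GL (Fin n) (ZMod 3)) →*
      Equiv.Perm (Fin n → ZMod 3) where
  toFun p :=
    { toFun := fun x => (p.right : Matrix (Fin n) (Fin n) (ZMod 3)).mulVec x + p.left.toAdd
      invFun := fun x =>
        ((p.right⁻¹ : GL (Fin n) (ZMod 3)) : Matrix (Fin n) (Fin n) (ZMod 3)).mulVec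
          (x - p.left.toAdd)
      left_inv := fun x => by
        simp only [add_sub_cancel_right, Matrix.mulVec_mulVec, Units.inv_mul,
          Matrix.one_mulVec]
      right_inv := fun x => by
        simp only [Matrix.mulVec_mulVec, Units.mul_inv, Matrix.one_mulVec,
          sub_add_cancel] }
  map_one' := by
    ext x
    simp [Matrix.one_mulVec]
  map_mul' p q := by
    refine Equiv.ext fun x => ?_
    show ((p * q).right : Matrix (Fin n) (Fin n) (ZMod 3)).mulVec x + (p * q).left.toAdd
      = (p.right : Matrix (Fin n) (Fin n) (ZMod 3)).mulVec
        ((q.right : Matrix (Fin n) (Fin n) (ZMod 3)).mulVec x + q.left.toAdd) + p.left.toAdd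
    rw [SemidirectProduct.mul_left, SemidirectProduct.mul_right]
    show ((p.right * q.right : GL (Fin n) (ZMod 3)) :
        Matrix (Fin n) (Fin n) (ZMod 3)).mulVec x +
        (p.left.toAdd + (p.right : Matrix (Fin n) (Fin n) (ZMod 3)).mulVec q.left.toAdd) = _
    rw [Units.val_mul, ← Matrix.mulVec_mulVec, Matrix.mulVec_add]
    abel

lemma affHom_apply (p : Multiplicative (Fin n → ZMod 3) ⋊[glAut n] GL (Fin n) (ZMod 3))
    (x : Fin n → ZMod 3) :
    affHom n p x = (p.right : Matrix (Fin n) (Fin n) (ZMod 3)).mulVec x + p.left.toAdd := rfl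

lemma affHom_injective : Function.Injective (affHom n) := by
  rw [injective_iff_map_eq_one]
  intro p hp
  have hx : ∀ x, (p.right : Matrix (Fin n) (Fin n) (ZMod 3)).mulVec x + p.left.toAdd = x := by
    intro x
    have h := Equiv.ext_iff.mp hp x
    simpa [affHom_apply] using h
  have hb : p.left.toAdd = 0 := by simpa [Matrix.mulVec_zero] using hx 0
  have hA : (p.right : Matrix (Fin n) (Fin n) (ZMod 3)) = 1 := by
    ext i j
    have h := congrFun ((by simpa [hb] using hx (Pi.single j 1)) :
      (p.right : Matrix (Fin n) (Fin n) (ZMod 3)).mulVec (Pi.single j 1) = Pi.single j 1) i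
    simpa [Matrix.mulVec_single, Matrix.one_apply, Pi.single_apply, eq_comm] using h
  have h1 : p.left = 1 := by
    apply Multiplicative.toAdd.injective
    simpa using hb
  have h2 : p.right = 1 := Units.ext (by simpa using hA)
  cases p
  cases h1
  cases h2
  rfl

lemma zmod3_mul_self (c : ZMod 3) (hc : c ≠ 0) : c * c = 1 := by revert c; decide

lemma zmod3_val_smul_one (c : ZMod 3) : c.val • (1 : ZMod 3) = c := by revert c; decide

lemma zmod3_natCast_val (c : ZMod 3) : ((c.val : ℕ) : ZMod 3) = c := by revert c; decide

/-- `S_{1,2}` on coordinate `i` as an element of `GL(n, F₃)`. -/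
def s12GL (n : ℕ) (i : Fin n) : GL (Fin n) (ZMod 3) :=
  have h : Matrix.diagonal (Function.update (1 : Fin n → ZMod 3) i 2) *
      Matrix.diagonal (Function.update (1 : Fin n → ZMod 3) i 2) = 1 := by
    have hfun : (fun j => Function.update (1 : Fin n → ZMod 3) i 2 j *
        Function.update (1 : Fin n → ZMod 3) i 2 j) = fun _ => (1 : ZMod 3) := by
      funext j
      rcases eq_or_ne j i with rfl | hj
      · simp only [Function.update_self]; decide
      · simp [Function.update_of_ne hj]
    rw [Matrix.diagonal_mul_diagonal, hfun, Matrix.diagonal_one]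
  ⟨_, _, h, h⟩

/-- A single-coordinate scaling as an element of `GL(n, F₃)`. -/
def scaleGL (n : ℕ) (i : Fin n) (d : ZMod 3) (hd : d ≠ 0) : GL (Fin n) (ZMod 3) :=
  have h : Matrix.diagonal (Function.update (1 : Fin n → ZMod 3) i d) *
      Matrix.diagonal (Function.update (1 : Fin n → ZMod 3) i d) = 1 := by
    have hfun : (fun j => Function.update (1 : Fin n → ZMod 3) i d j *
        Function.update (1 : Fin n → ZMod 3) i d j) = fun _ => (1 : ZMod 3) := by
      funext j
      rcases eq_or_ne j i with rfl | hj
      · simp [zmod3_mul_self _ hd]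
      · simp [Function.update_of_ne hj]
    rw [Matrix.diagonal_mul_diagonal, hfun, Matrix.diagonal_one]
  ⟨_, _, h, h⟩

/-- A transvection as an element of `GL(n, F₃)`. -/
def transvGL (n : ℕ) (i j : Fin n) (h : i ≠ j) (c : ZMod 3) : GL (Fin n) (ZMod 3) :=
  ⟨Matrix.transvection i j c, Matrix.transvection i j (-c),
    by rw [Matrix.transvection_mul_transvection_same _ _ h]; simp,
    by rw [Matrix.transvection_mul_transvection_same _ _ h]; simp⟩

lemma s12GL_val (i : Fin n) : ((s12GL n i : GL (Fin n) (ZMod 3)) :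
    Matrix (Fin n) (Fin n) (ZMod 3)) = Matrix.diagonal (Function.update 1 i 2) := rfl

lemma affHom_inr_s12GL (i : Fin n) :
    affHom n (SemidirectProduct.inr (s12GL n i)) = s12Gate n i := by
  refine Equiv.ext fun x => ?_
  rw [affHom_apply]
  simp only [SemidirectProduct.right_inr, SemidirectProduct.left_inr, toAdd_one, add_zero,
    s12GL_val]
  funext j
  rcases eq_or_ne j i with rfl | h
  · simp [Matrix.mulVec_diagonal, s12Gate, s12Fun]
  · simp [Matrix.mulVec_diagonal, s12Gate, s12Fun, Function.update_of_ne h]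

lemma affHom_inl_single (i : Fin n) :
    affHom n (SemidirectProduct.inl (Multiplicative.ofAdd (Pi.single i 1))) = xGate n i := by
  refine Equiv.ext fun x => ?_
  rw [affHom_apply]
  simp only [SemidirectProduct.right_inl, SemidirectProduct.left_inl, Units.val_one,
    Matrix.one_mulVec, toAdd_ofAdd]
  funext j
  rcases eq_or_ne j i with rfl | h
  · simp [xGate, xFun]
  · simp [xGate, xFun, Function.update_of_ne h, Pi.single_eq_of_ne h]

lemma transvection_mulVec (i j : Fin n) (c : ZMod 3) (x : Fin n → ZMod 3) (h : i ≠ j) :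
    (Matrix.transvection i j c).mulVec x = Function.update x i (x i + c * x j) := by
  funext m
  rw [Matrix.transvection, Matrix.add_mulVec, Matrix.one_mulVec]
  rcases eq_or_ne m i with rfl | hm
  · simp [Matrix.mulVec, dotProduct, Matrix.single, Finset.sum_ite_eq]
  · simp [Matrix.mulVec, dotProduct, Matrix.single, Function.update_of_ne hm,
      Ne.symm hm]

lemma transvGL_val (i j : Fin n) (h : i ≠ j) (c : ZMod 3) :
    ((transvGL n i j h c : GL (Fin n) (ZMod 3)) : Matrix (Fin n) (Fin n) (ZMod 3))
      = Matrix.transvection i j c := rfl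

lemma affHom_inr_transvGL (i j : Fin n) (h : i ≠ j) :
    affHom n (SemidirectProduct.inr (transvGL n j i h.symm 1)) = sumGate n i j h := by
  refine Equiv.ext fun x => ?_
  rw [affHom_apply]
  simp only [SemidirectProduct.right_inr, SemidirectProduct.left_inr, toAdd_one, add_zero,
    transvGL_val]
  rw [transvection_mulVec _ _ _ _ h.symm]
  funext m
  simp [sumGate, sumFun]

lemma gateSet_subset_range : gateSet n ⊆ Set.range (affHom n) := by
  rintro e (⟨i, rfl⟩ | ⟨i, rfl⟩ | ⟨i, j, h, rfl⟩)
  · exact ⟨_, affHom_inr_s12GL i⟩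
  · exact ⟨_, affHom_inl_single i⟩
  · exact ⟨_, affHom_inr_transvGL i j h⟩

/-- Translations lie in the closure of the gate set. -/
lemma inl_mem_closure (b : Multiplicative (Fin n → ZMod 3)) :
    affHom n (SemidirectProduct.inl b) ∈ Subgroup.closure (gateSet n) := by
  have hb : b = ∏ i : Fin n,
      (Multiplicative.ofAdd (Pi.single i (1 : ZMod 3))) ^ (b.toAdd i).val := by
    apply Multiplicative.toAdd.injective
    rw [toAdd_prod]
    simp only [toAdd_pow, toAdd_ofAdd]
    have h1 : ∀ i : Fin n, ((b.toAdd i).val • Pi.single i (1 : ZMod 3) : Fin n → ZMod 3)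
        = Pi.single i (b.toAdd i) := by
      intro i
      funext j
      rcases eq_or_ne j i with rfl | hj
      · simp [zmod3_val_smul_one]
      · simp [Pi.single_eq_of_ne hj]
    simp_rw [h1]
    exact (Finset.univ_sum_single b.toAdd).symm
  have hmem : b ∈ Subgroup.comap ((affHom n).comp
      (SemidirectProduct.inl : Multiplicative (Fin n → ZMod 3) →*
        Multiplicative (Fin n → ZMod 3) ⋊[glAut n] GL (Fin n) (ZMod 3)))
      (Subgroup.closure (gateSet n)) := by
    rw [hb]
    apply Subgroup.prod_mem
    intro i _
    apply pow_mem
    show affHom n (SemidirectProduct.inl (Multiplicative.ofAdd (Pi.single i 1)))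
      ∈ Subgroup.closure (gateSet n)
    rw [affHom_inl_single]
    exact Subgroup.subset_closure (Or.inr (Or.inl ⟨i, rfl⟩))
  exact hmem

lemma scaleGL_mem_closure (i : Fin n) (d : ZMod 3) (hd : d ≠ 0) :
    affHom n (SemidirectProduct.inr (scaleGL n i d hd)) ∈ Subgroup.closure (gateSet n) := by
  have hcases : d = 1 ∨ d = 2 := by revert d; decide
  rcases hcases with rfl | rfl
  · have : scaleGL n i 1 hd = 1 := by
      apply Units.ext
      show Matrix.diagonal (Function.update (1 : Fin n → ZMod 3) i 1) = 1
      rw [show Function.update (1 : Fin n → ZMod 3) i 1 = 1 from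
        Function.update_eq_self i (1 : Fin n → ZMod 3)]
      exact Matrix.diagonal_one
    rw [this, map_one, map_one]
    exact one_mem _
  · have : scaleGL n i 2 hd = s12GL n i := Units.ext rfl
    rw [this, affHom_inr_s12GL]
    exact Subgroup.subset_closure (Or.inl ⟨i, rfl⟩)

lemma transv_pow (i j : Fin n) (h : i ≠ j) (k : ℕ) :
    (Matrix.transvection i j (1 : ZMod 3)) ^ k = Matrix.transvection i j (k : ZMod 3) := by
  induction k with
  | zero => simp
  | succ k ih =>
    rw [pow_succ, ih, Matrix.transvection_mul_transvection_same _ _ h]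
    push_cast
    ring_nf

lemma transvGL_eq_pow (i j : Fin n) (h : i ≠ j) (c : ZMod 3) :
    transvGL n i j h c = (transvGL n i j h 1) ^ c.val := by
  apply Units.ext
  rw [Units.val_pow_eq_pow_val]
  show Matrix.transvection i j c = (Matrix.transvection i j 1) ^ c.val
  rw [transv_pow i j h, zmod3_natCast_val]

lemma transvGL_mem_closure (i j : Fin n) (h : i ≠ j) (c : ZMod 3) :
    affHom n (SemidirectProduct.inr (transvGL n i j h c)) ∈ Subgroup.closure (gateSet n) := by
  rw [transvGL_eq_pow i j h c, map_pow, map_pow]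
  refine pow_mem ?_ _
  have := affHom_inr_transvGL j i h.symm
  rw [this]
  exact Subgroup.subset_closure (Or.inr (Or.inr ⟨j, i, h.symm, rfl⟩))

lemma scaleGL_comm (D : Fin n → ZMod 3) (hD : ∀ i, D i ≠ 0) :
    ((Finset.univ : Finset (Fin n)) : Set (Fin n)).Pairwise fun a b =>
      Commute (scaleGL n a (D a) (hD a)) (scaleGL n b (D b) (hD b)) := by
  intro a _ b _ _
  apply Units.ext
  show Matrix.diagonal (Function.update (1 : Fin n → ZMod 3) a (D a)) *
      Matrix.diagonal (Function.update (1 : Fin n → ZMod 3) b (D b))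
    = Matrix.diagonal (Function.update (1 : Fin n → ZMod 3) b (D b)) *
      Matrix.diagonal (Function.update (1 : Fin n → ZMod 3) a (D a))
  rw [Matrix.diagonal_mul_diagonal, Matrix.diagonal_mul_diagonal]
  have hfun : (fun i => Function.update (1 : Fin n → ZMod 3) a (D a) i *
      Function.update (1 : Fin n → ZMod 3) b (D b) i)
      = fun i => Function.update (1 : Fin n → ZMod 3) b (D b) i *
        Function.update (1 : Fin n → ZMod 3) a (D a) i := by
    funext j
    exact mul_comm _ _
  rw [hfun]

/-- Invertible diagonal matrices lie in the closure of the gate set. -/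
lemma diagGL_mem_closure (D : Fin n → ZMod 3) (hD : ∀ i, D i ≠ 0)
    (B : GL (Fin n) (ZMod 3)) (hB : (B : Matrix (Fin n) (Fin n) (ZMod 3)) = Matrix.diagonal D) :
    affHom n (SemidirectProduct.inr B) ∈ Subgroup.closure (gateSet n) := by
  have hBeq : B = Finset.univ.noncommProd (fun i => scaleGL n i (D i) (hD i))
      (scaleGL_comm D hD) := by
    apply Units.ext
    rw [hB]
    rw [← Units.coeHom_apply, Finset.map_noncommProd]
    have step : ∀ i : Fin n, Units.coeHom (Matrix (Fin n) (Fin n) (ZMod 3))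
        (scaleGL n i (D i) (hD i))
        = Matrix.diagonalRingHom (Fin n) (ZMod 3) (Function.update 1 i (D i)) := fun _ => rfl
    simp_rw [step]
    have hmap := Finset.map_noncommProd (Finset.univ : Finset (Fin n))
      (fun i => Function.update (1 : Fin n → ZMod 3) i (D i))
      (fun _ _ _ _ _ => Commute.all _ _) (Matrix.diagonalRingHom (Fin n) (ZMod 3))
    rw [← hmap, Finset.noncommProd_eq_prod]
    have hprod : (∏ x : Fin n, Function.update (1 : Fin n → ZMod 3) x (D x)) = D := by
      funext j
      rw [Finset.prod_apply]
      simp only [Function.update_apply, Pi.one_apply]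
      rw [Finset.prod_ite_eq]
      simp
    rw [hprod]
    rfl
  rw [hBeq]
  show ((affHom n).comp SemidirectProduct.inr) (Finset.univ.noncommProd _ (scaleGL_comm D hD))
    ∈ Subgroup.closure (gateSet n)
  rw [Finset.map_noncommProd]
  apply Subgroup.noncommProd_mem
  intro i _
  exact scaleGL_mem_closure i (D i) (hD i)

/-- Every linear part lies in the closure of the gate set. -/
lemma inr_mem_closure (A : GL (Fin n) (ZMod 3)) :
    affHom n (SemidirectProduct.inr A) ∈ Subgroup.closure (gateSet n) := by
  obtain ⟨L, L', D, hM⟩ :=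
    Matrix.Pivot.exists_list_transvec_mul_diagonal_mul_list_transvec
      (A : Matrix (Fin n) (Fin n) (ZMod 3))
  -- each diagonal entry is nonzero
  have hdet : (A : Matrix (Fin n) (Fin n) (ZMod 3)).det ≠ 0 := by
    have : IsUnit (A : Matrix (Fin n) (Fin n) (ZMod 3)) := ⟨A, rfl⟩
    have := (Matrix.isUnit_iff_isUnit_det _).mp this
    exact this.ne_zero
  have hDprod : (∏ i : Fin n, D i) ≠ 0 := by
    intro hzero
    apply hdet
    rw [hM]
    simp [Matrix.det_mul, Matrix.det_diagonal, hzero]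
  have hD : ∀ i, D i ≠ 0 := by
    intro i hi
    exact hDprod (Finset.prod_eq_zero (Finset.mem_univ i) hi)
  -- the diagonal part as a GL element
  have hDD : Matrix.diagonal D * Matrix.diagonal D = 1 := by
    have hfun : (fun j => D j * D j) = fun _ => (1 : ZMod 3) := by
      funext j; exact zmod3_mul_self _ (hD j)
    rw [Matrix.diagonal_mul_diagonal, hfun, Matrix.diagonal_one]
  set Du : GL (Fin n) (ZMod 3) := ⟨Matrix.diagonal D, Matrix.diagonal D, hDD, hDD⟩ with hDu
  -- the transvection lists as GL elements
  have coe_list : ∀ (L₀ : List (Matrix.TransvectionStruct (Fin n) (ZMod 3))),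
      (((L₀.map (fun t => transvGL n t.i t.j t.hij t.c)).prod : GL (Fin n) (ZMod 3)) :
        Matrix (Fin n) (Fin n) (ZMod 3))
      = (L₀.map Matrix.TransvectionStruct.toMatrix).prod := by
    intro L₀
    rw [← Units.coeHom_apply, map_list_prod, List.map_map]
    congr 1
  have hA : A = (L.map (fun t => transvGL n t.i t.j t.hij t.c)).prod * Du *
      (L'.map (fun t => transvGL n t.i t.j t.hij t.c)).prod := by
    apply Units.ext
    rw [Units.val_mul, Units.val_mul, coe_list, coe_list]
    rw [hM]
  rw [hA, map_mul, map_mul, map_mul, map_mul]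
  have hlist : ∀ (L₀ : List (Matrix.TransvectionStruct (Fin n) (ZMod 3))),
      affHom n (SemidirectProduct.inr
        ((L₀.map (fun t => transvGL n t.i t.j t.hij t.c)).prod)) ∈
        Subgroup.closure (gateSet n) := by
    intro L₀
    rw [map_list_prod, map_list_prod, List.map_map, List.map_map]
    apply Subgroup.list_prod_mem
    intro x hx
    rw [List.mem_map] at hx
    obtain ⟨t, _, rfl⟩ := hx
    exact transvGL_mem_closure t.i t.j t.hij t.c
  exact mul_mem (mul_mem (hlist L) (diagGL_mem_closure D hD Du rfl)) (hlist L')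

lemma range_eq_closure : (affHom n).range = Subgroup.closure (gateSet n) := by
  apply le_antisymm
  · rintro x ⟨p, rfl⟩
    rw [← SemidirectProduct.inl_left_mul_inr_right p, map_mul]
    exact mul_mem (inl_mem_closure p.left) (inr_mem_closure p.right)
  · rw [Subgroup.closure_le]
    intro e he
    obtain ⟨p, hp⟩ := gateSet_subset_range he
    exact ⟨p, hp⟩

end Aux

/-- For every `n ≥ 1`, the subgroup of the symmetric group on `F₃ⁿ` generated by
the permutations induced by the gates `S_{1,2}`, `X` and `SUM` (over all choices
of coordinates) is isomorphic to the semidirect product `GL(n, F₃) ⋉ F₃ⁿ`. -/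
theorem closure_gateSet_iso_affineGroup (n : ℕ) (hn : 1 ≤ n) :
    Nonempty ((Subgroup.closure (gateSet n)) ≃*
      Multiplicative (Fin n → ZMod 3) ⋊[glAut n] GL (Fin n) (ZMod 3)) := by
  exact ⟨(MulEquiv.subgroupCongr range_eq_closure.symm).trans
    (MonoidHom.ofInjective affHom_injective).symm⟩
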